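/- Let N and d be positive integers with N ≥ d+1, let p ≥ 2, and let A be a real N×N matrix of rank d with all diagonal entries equal to 1. Then E_p(A) ≥ (N−1)^{1−p/2} · M(1/(N−d), p, N), where M(c, p, N) is the infimum of ∑_{i=1}^N (t_i/(c − t_i))^{p/2} over all tuples (t_1, …, t_N) with t_i ∈ [0, c) for each i and ∑_{i=1}^N t_i = 1. -/

import Mathlib

open scoped RealInnerProductSpace
open Finset Module


lemma eucl_norm_sq {ι : Type*} [Fintype ι] (x : EuclideanSpace ℝ ι) :
    ‖x‖ ^ 2 = ∑ j, (x j) ^ 2 := by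
  rw [← real_inner_self_eq_norm_sq, PiLp.inner_apply]
  simp [sq]

lemma aux_proj (N : ℕ) (V : Submodule ℝ (EuclideanSpace ℝ (Fin N)))
    [FiniteDimensional ℝ V]
    (a : Fin N → EuclideanSpace ℝ (Fin N)) (ha : ∀ i, a i ∈ V)
    (h1 : ∀ i, a i i = 1) :
    ∑ i, 1 / ‖a i‖ ^ 2 ≤ (finrank ℝ V : ℝ) := by
  set b := stdOrthonormalBasis ℝ V with hb
  have key : ∀ i, 1 / ‖a i‖ ^ 2 ≤ ∑ k, ((b k : EuclideanSpace ℝ (Fin N)) i) ^ 2 := by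
    intro i
    set e : EuclideanSpace ℝ (Fin N) := EuclideanSpace.single i 1 with he
    have hP : (⟪(⟨a i, ha i⟩ : V), V.orthogonalProjectionOnto e⟫ : ℝ) = 1 := by
      rw [Submodule.inner_orthogonalProjectionOnto_eq_of_mem_left]
      simp [he, h1 i, EuclideanSpace.inner_single_right]
    have hcs : (1:ℝ) ≤ ‖a i‖ * ‖(V.orthogonalProjectionOnto e : V)‖ := by
      calc (1:ℝ) = ⟪(⟨a i, ha i⟩ : V), V.orthogonalProjectionOnto e⟫ := hP.symm
        _ ≤ ‖(⟨a i, ha i⟩ : V)‖ * ‖(V.orthogonalProjectionOnto e : V)‖ := real_inner_le_norm _ _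
        _ = ‖a i‖ * ‖(V.orthogonalProjectionOnto e : V)‖ := rfl
    have hnorm : ‖(V.orthogonalProjectionOnto e : V)‖ ^ 2
        = ∑ k, ((b k : EuclideanSpace ℝ (Fin N)) i) ^ 2 := by
      rw [← (b.repr).norm_map (V.orthogonalProjectionOnto e), eucl_norm_sq]
      apply Finset.sum_congr rfl
      intro k _
      rw [b.repr_apply_apply, Submodule.inner_orthogonalProjectionOnto_eq_of_mem_left]
      simp [he, EuclideanSpace.inner_single_right]
    have hai : (0:ℝ) < ‖a i‖ := by
      rcases eq_or_lt_of_le (norm_nonneg (a i)) with h | h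
      · exfalso
        have hz : a i = 0 := by rwa [eq_comm, norm_eq_zero] at h
        have h1' := h1 i
        rw [hz] at h1'
        simpa using h1'
      · exact h
    rw [← hnorm, div_le_iff₀ (by positivity)]
    calc (1:ℝ) ≤ (‖a i‖ * ‖(V.orthogonalProjectionOnto e : V)‖)^2 := by
          nlinarith [hcs]
      _ = ‖(V.orthogonalProjectionOnto e : V)‖ ^ 2 * ‖a i‖ ^ 2 := by ring
  calc ∑ i, 1 / ‖a i‖ ^ 2 ≤ ∑ i, ∑ k, ((b k : EuclideanSpace ℝ (Fin N)) i) ^ 2 :=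
        Finset.sum_le_sum fun i _ => key i
    _ = ∑ k, ∑ i, ((b k : EuclideanSpace ℝ (Fin N)) i) ^ 2 := Finset.sum_comm
    _ = ∑ k : Fin (finrank ℝ V), (1:ℝ) := by
        apply Finset.sum_congr rfl
        intro k _
        rw [← eucl_norm_sq]
        have h1 : ‖b k‖ = 1 := b.orthonormal.1 k
        rw [show ‖(b k : EuclideanSpace ℝ (Fin N))‖ = ‖b k‖ from rfl, h1]; norm_num
    _ = (finrank ℝ V : ℝ) := by simp


lemma aux_split (N : ℕ) (i : Fin N) (g : Fin N → ℝ) :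
    (∑ j, if i = j then 0 else g j) = ∑ j ∈ univ.erase i, g j := by
  have h0 : (if i = i then (0:ℝ) else g i) = 0 := by simp
  rw [← Finset.sum_erase (Finset.univ) (f := fun j => if i = j then (0:ℝ) else g j) (a := i) h0]
  exact Finset.sum_congr rfl fun j hj => if_neg fun h => (Finset.mem_erase.mp hj).1 h.symm

-- per-row power mean inequality
lemma aux_pm (N : ℕ) (hN2 : 2 ≤ N) (p : ℝ) (hp : 2 ≤ p) (i : Fin N) (f : Fin N → ℝ) :
    ((N:ℝ) - 1) ^ (1 - p/2) * (∑ j, if i = j then 0 else (f j)^2) ^ (p/2)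
      ≤ ∑ j, if i = j then 0 else |f j| ^ p := by
  have hN1 : (0:ℝ) < (N:ℝ) - 1 := by
    have : (2:ℝ) ≤ N := by exact_mod_cast hN2
    linarith
  have hcard : ((univ.erase i).card : ℝ) = (N:ℝ) - 1 := by
    rw [Finset.card_erase_of_mem (mem_univ i), card_univ, Fintype.card_fin]
    have : 1 ≤ N := by omega
    push_cast [this]; ring
  have hq : 1 ≤ p/2 := by linarith
  have key := Real.rpow_arith_mean_le_arith_mean_rpow (univ.erase i)
    (fun _ => 1/((N:ℝ)-1)) (fun j => (f j)^2)
    (fun _ _ => by positivity) (by rw [Finset.sum_const, nsmul_eq_mul, hcard]; field_simp)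
    (fun j _ => sq_nonneg _) hq
  have hconv : ∀ j, ((f j)^2 : ℝ) ^ (p/2) = |f j| ^ p := by
    intro j
    rw [← sq_abs, ← Real.rpow_natCast |f j| 2, ← Real.rpow_mul (abs_nonneg _)]
    congr 1
    push_cast; ring
  rw [aux_split, aux_split]
  have hL : (∑ j ∈ univ.erase i, (1/((N:ℝ)-1)) * (f j)^2)
      = (1/((N:ℝ)-1)) * ∑ j ∈ univ.erase i, (f j)^2 := by rw [Finset.mul_sum]
  have hR : (∑ j ∈ univ.erase i, (1/((N:ℝ)-1)) * ((f j)^2) ^ (p/2))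
      = (1/((N:ℝ)-1)) * ∑ j ∈ univ.erase i, |f j| ^ p := by
    rw [Finset.mul_sum]; exact Finset.sum_congr rfl fun j _ => by rw [hconv]
  rw [hL, hR] at key
  have hmul : ((1/((N:ℝ)-1)) * ∑ j ∈ univ.erase i, (f j)^2) ^ (p/2)
      = (1/((N:ℝ)-1)) ^ (p/2) * (∑ j ∈ univ.erase i, (f j)^2) ^ (p/2) :=
    Real.mul_rpow (by positivity) (Finset.sum_nonneg fun j _ => sq_nonneg _)
  rw [hmul] at key
  have h2 : ((N:ℝ)-1) * ((1/((N:ℝ)-1)) ^ (p/2) * (∑ j ∈ univ.erase i, (f j)^2) ^ (p/2))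
      ≤ ((N:ℝ)-1) * ((1/((N:ℝ)-1)) * ∑ j ∈ univ.erase i, |f j| ^ p) :=
    mul_le_mul_of_nonneg_left key (le_of_lt hN1)
  have h3 : ((N:ℝ)-1) * ((1/((N:ℝ)-1)) * ∑ j ∈ univ.erase i, |f j| ^ p)
      = ∑ j ∈ univ.erase i, |f j| ^ p := by field_simp
  have h4 : ((N:ℝ)-1) * (1/((N:ℝ)-1)) ^ (p/2) = ((N:ℝ)-1) ^ (1 - p/2) := by
    rw [one_div, ← Real.rpow_neg_one ((N:ℝ)-1), ← Real.rpow_mul hN1.le,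
      show (1 - p/2) = 1 + (-1)*(p/2) by ring, Real.rpow_add hN1, Real.rpow_one]
  calc ((N:ℝ)-1)^(1-p/2) * (∑ j ∈ univ.erase i, (f j)^2) ^ (p/2)
      = ((N:ℝ)-1) * ((1/((N:ℝ)-1))^(p/2) * (∑ j ∈ univ.erase i, (f j)^2)^(p/2)) := by
        rw [← h4]; ring
    _ ≤ ((N:ℝ)-1) * ((1/((N:ℝ)-1)) * ∑ j ∈ univ.erase i, |f j| ^ p) := h2
    _ = ∑ j ∈ univ.erase i, |f j| ^ p := h3


/-- For `p ≥ 2` and any real `N × N` matrix `A` of rank `d`, `N ≥ d + 1`, with unit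
diagonal entries, the `p`-frame energy `E_p(A) = ∑_{i ≠ j} |A_{ij}|^p` is at least
`(N-1)^{1-p/2} · M(1/(N-d), p, N)`, where `M(c, p, N)` is the infimum of
`∑ᵢ (tᵢ/(c - tᵢ))^{p/2}` over all tuples with `tᵢ ∈ [0, c)` and `∑ tᵢ = 1`. -/
theorem pFrameEnergy_ge_M_of_two_le (N d : ℕ) (hd : 0 < d) (hN : d + 1 ≤ N)
    (p : ℝ) (hp : 2 ≤ p)
    (A : Matrix (Fin N) (Fin N) ℝ) (hrank : A.rank = d) (hdiag : ∀ i, A i i = 1) :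
    ((N : ℝ) - 1) ^ (1 - p / 2) *
      sInf {s : ℝ | ∃ t : Fin N → ℝ,
        (∀ i, 0 ≤ t i ∧ t i < 1 / ((N : ℝ) - (d : ℝ))) ∧ (∑ i, t i = 1) ∧
        s = ∑ i, (t i / (1 / ((N : ℝ) - (d : ℝ)) - t i)) ^ (p / 2)} ≤
      ∑ i, ∑ j, if i = j then 0 else |A i j| ^ p := by
  have hN2 : 2 ≤ N := by omega
  have hNd1 : (1:ℝ) ≤ (N:ℝ) - d := by
    have : ((d:ℝ) + 1) ≤ N := by exact_mod_cast hN
    linarith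
  set c : ℝ := 1 / ((N : ℝ) - (d : ℝ)) with hc_def
  have hc : 0 < c := by positivity
  -- rows, span, rank
  set a : Fin N → EuclideanSpace ℝ (Fin N) := fun i => (WithLp.equiv 2 (Fin N → ℝ)).symm (A i)
    with ha_def
  set V : Submodule ℝ (EuclideanSpace ℝ (Fin N)) := Submodule.span ℝ (Set.range a) with hV_def
  have haV : ∀ i, a i ∈ V := fun i => Submodule.subset_span ⟨i, rfl⟩
  have hrk : finrank ℝ V = d := by
    rw [← hrank, Matrix.rank_eq_finrank_span_row]
    let e := WithLp.linearEquiv 2 ℝ (Fin N → ℝ)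
    have hmap : V.map (e : EuclideanSpace ℝ (Fin N) →ₗ[ℝ] (Fin N → ℝ)) =
        Submodule.span ℝ (Set.range A) := by
      rw [hV_def, Submodule.map_span]
      congr 1
      ext x
      constructor
      · rintro ⟨y, ⟨i, rfl⟩, rfl⟩; exact ⟨i, rfl⟩
      · rintro ⟨i, rfl⟩; exact ⟨a i, ⟨i, rfl⟩, rfl⟩
    rw [show A.row = A from rfl, ← hmap]
    exact (Submodule.equivMapOfInjective _ e.injective V).finrank_eq.symm ▸
      (Submodule.equivMapOfInjective _ e.injective V).finrank_eq
  -- s i and r i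
  set s : Fin N → ℝ := fun i => ∑ j, (A i j)^2 with hs_def
  set r : Fin N → ℝ := fun i => ∑ j, if i = j then 0 else (A i j)^2 with hr_def
  have hsr : ∀ i, s i = r i + 1 := by
    intro i
    rw [hs_def, hr_def]
    simp only
    have : ∀ j, (A i j)^2 = (if i = j then 0 else (A i j)^2) + (if i = j then (A i j)^2 else 0) := by
      intro j; by_cases h : i = j <;> simp [h]
    rw [Finset.sum_congr rfl fun j _ => this j, Finset.sum_add_distrib]
    congr 1
    rw [Finset.sum_ite_eq Finset.univ i (fun j => (A i j)^2)]
    simp [hdiag i]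
  have hr0 : ∀ i, 0 ≤ r i := fun i => Finset.sum_nonneg fun j _ => by positivity
  have hs1 : ∀ i, 1 ≤ s i := fun i => by have := hr0 i; rw [hsr i]; linarith
  have hspos : ∀ i, 0 < s i := fun i => lt_of_lt_of_le one_pos (hs1 i)
  -- key: sum of 1/s i ≤ d
  have hnorm : ∀ i, ‖a i‖ ^ 2 = s i := by
    intro i
    rw [eucl_norm_sq]
    rfl
  have hkey : ∑ i, 1 / s i ≤ (d : ℝ) := by
    have := aux_proj N V a haV (fun i => hdiag i)
    rw [hrk] at this
    calc ∑ i, 1 / s i = ∑ i, 1 / ‖a i‖ ^ 2 := by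
          exact Finset.sum_congr rfl fun i _ => by rw [hnorm]
      _ ≤ (d:ℝ) := this
  -- construct t
  set S : ℝ := ∑ i, (1 - 1 / s i) with hS_def
  have hSge : (N:ℝ) - d ≤ S := by
    rw [hS_def, Finset.sum_sub_distrib]
    simp only [Finset.sum_const, card_univ, Fintype.card_fin, nsmul_eq_mul, mul_one]
    linarith [hkey]
  have hSpos : 0 < S := lt_of_lt_of_le (by linarith) hSge
  set t : Fin N → ℝ := fun i => (1 - 1 / s i) / S with ht_def
  have ht0 : ∀ i, 0 ≤ t i := by
    intro i
    apply div_nonneg _ hSpos.le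
    have : 1 / s i ≤ 1 := by
      rw [div_le_one (hspos i)]; exact hs1 i
    linarith
  have hst : ∀ i, s i * t i ≤ c * (s i - 1) := by
    intro i
    have hs0 := (hspos i).ne'
    have h1 : s i * t i = (s i - 1) / S := by
      simp only [ht_def]
      rw [← mul_div_assoc]
      congr 1
      field_simp
    rw [h1]
    have h2 : (s i - 1) / S ≤ (s i - 1) / ((N:ℝ) - d) := by
      gcongr
      all_goals linarith [hs1 i, hSge]
    refine h2.trans_eq ?_
    rw [hc_def]
    ring
  have htc : ∀ i, t i < c := by
    intro i
    nlinarith [hst i, hs1 i, hc, hspos i, ht0 i]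
  have hsumt : ∑ i, t i = 1 := by
    simp only [ht_def]
    rw [← Finset.sum_div, ← hS_def, div_self hSpos.ne']
  have hratio : ∀ i, t i / (c - t i) ≤ r i := by
    intro i
    rw [div_le_iff₀ (by linarith [htc i])]
    have h1 : r i = s i - 1 := by linarith [hsr i]
    rw [h1]
    nlinarith [hst i, hs1 i, ht0 i, htc i, hc]
  -- the sInf bound
  set T : Set ℝ := {s : ℝ | ∃ t : Fin N → ℝ,
        (∀ i, 0 ≤ t i ∧ t i < c) ∧ (∑ i, t i = 1) ∧
        s = ∑ i, (t i / (c - t i)) ^ (p / 2)} with hT_def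
  have hmem : (∑ i, (t i / (c - t i)) ^ (p/2)) ∈ T :=
    ⟨t, fun i => ⟨ht0 i, htc i⟩, hsumt, rfl⟩
  have hbdd : BddBelow T := by
    refine ⟨0, fun x hx => ?_⟩
    obtain ⟨u, hu, -, rfl⟩ := hx
    exact Finset.sum_nonneg fun i _ => Real.rpow_nonneg
      (div_nonneg (hu i).1 (by linarith [(hu i).2])) _
  have hInf : sInf T ≤ ∑ i, (r i) ^ (p/2) := by
    refine le_trans (csInf_le hbdd hmem) (Finset.sum_le_sum fun i _ => ?_)
    exact Real.rpow_le_rpow (div_nonneg (ht0 i) (by linarith [htc i])) (hratio i) (by linarith)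
  have hfac : (0:ℝ) ≤ ((N:ℝ) - 1) ^ (1 - p/2) :=
    Real.rpow_nonneg (by
      have h2 : (2:ℝ) ≤ (N:ℝ) := by exact_mod_cast hN2
      linarith) _
  calc ((N : ℝ) - 1) ^ (1 - p / 2) * sInf T
      ≤ ((N : ℝ) - 1) ^ (1 - p / 2) * ∑ i, (r i) ^ (p/2) :=
        mul_le_mul_of_nonneg_left hInf hfac
    _ = ∑ i, ((N : ℝ) - 1) ^ (1 - p / 2) * (r i) ^ (p/2) := Finset.mul_sum _ _ _
    _ ≤ ∑ i, ∑ j, if i = j then 0 else |A i j| ^ p :=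
        Finset.sum_le_sum fun i _ => aux_pm N hN2 p hp i (A i)
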